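/- The holomorphic polynomial map F : ℂ⁴ → ℂ⁴ given by F(z₁,z₂,z₃,z₄) = ((1/√2)(z₁+z₂+z₁z₃+z₁³/12), √2(z₃+z₁²/4), (1/√2)(z₁−z₂−z₁z₃−z₁³/12), 4z₄−2z₁z₂−2z₃²−z₁²z₃−z₁⁴/24) satisfies, for all z ∈ ℂ⁴: Re(F₄(z)) − |F₁(z)|² − |F₂(z)|² + |F₃(z)|² = 4(Re z₄ − Re z₁ · Re z₂ − (Re z₃)² − (Re z₁)²(Re z₃) − (1/12)(Re z₁)⁴). -/

import Mathlib

open Complex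

/-- The polynomial map transforming the tube over `x₄ = x₁x₂+x₃²+x₁²x₃+x₁⁴/12`
into the quadric `Re z₄ = |z₁|²+|z₂|²−|z₃|²`. -/
theorem map_to_quadric_identity (z₁ z₂ z₃ z₄ : ℂ) :
    let F₁ := (1 / (Real.sqrt 2 : ℂ)) * (z₁ + z₂ + z₁ * z₃ + z₁ ^ 3 / 12)
    let F₂ := (Real.sqrt 2 : ℂ) * (z₃ + z₁ ^ 2 / 4)
    let F₃ := (1 / (Real.sqrt 2 : ℂ)) * (z₁ - z₂ - z₁ * z₃ - z₁ ^ 3 / 12)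
    let F₄ := 4 * z₄ - 2 * z₁ * z₂ - 2 * z₃ ^ 2 - z₁ ^ 2 * z₃ - z₁ ^ 4 / 24
    F₄.re - ‖F₁‖ ^ 2 - ‖F₂‖ ^ 2 + ‖F₃‖ ^ 2 =
      4 * (z₄.re - z₁.re * z₂.re - z₃.re ^ 2 - z₁.re ^ 2 * z₃.re
        - (1 / 12) * z₁.re ^ 4) := by
  intro F₁ F₂ F₃ F₄
  have h2 : (Real.sqrt 2) * (Real.sqrt 2) = 2 := Real.mul_self_sqrt (by norm_num)
  simp only [F₁, F₂, F₃, F₄, mul_pow, inv_pow, one_div, Complex.sq_norm,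
    Complex.normSq_ofReal]
  simp only [map_mul, map_inv₀, Complex.normSq_ofReal]
  rw [h2]
  simp only [Complex.normSq_apply, pow_succ, pow_zero, one_mul,
    Complex.mul_re, Complex.mul_im, Complex.add_re, Complex.add_im,
    Complex.sub_re, Complex.sub_im, Complex.div_re, Complex.div_im,
    Complex.ofReal_re, Complex.ofReal_im, Complex.re_ofNat, Complex.im_ofNat,
    Complex.normSq_mk, Complex.normSq_apply]
  ring
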